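/- For the class H = {h_{a,b}} of lexicographic initial segments on ℕ×ℕ and the perturbation type U of Theorem 4.3, for every finite labelled sample S and every a ∈ ℕ: the empirical robust risk of h_{a,∞} is at most that of h_{a,b} for every b ∈ ℕ, i.e., R_U(h_{a,∞};S) ≤ R_U(h_{a,b};S). Consequently the subclass H' = {h_{a,∞} : a ∈ ℕ} always contains an empirical robust risk minimizer of H. -/

import Mathlib

/-- The robust loss of hypothesis `f` on `(x,y)` with respect to `U`. -/
def RobLoss {α : Type*} (U : α → Set α) (f : α → Bool) (x : α) (y : Bool) : Prop :=
  ∃ z ∈ U x, f z ≠ y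

open Classical in
/-- The empirical robust risk of `f` on the finite labelled sample `S`. -/
noncomputable def empRobRisk {α : Type*} (U : α → Set α) (f : α → Bool)
    (S : List (α × Bool)) : ℝ :=
  ((S.map fun p => if RobLoss U f p.1 p.2 then (1 : ℝ) else 0).sum) / S.length

/-- The lexicographic initial segment `h_{a,b}` on `ℕ × ℕ` for `a, b ∈ ℕ ∪ {0,∞}`. -/
def hLex (a b : ℕ∞) (p : ℕ × ℕ) : Bool :=
  decide ((p.1 : ℕ∞) < a ∨ ((p.1 : ℕ∞) = a ∧ (p.2 : ℕ∞) ≤ b))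

/-- The proof-checking perturbation type of Theorem 4.3. -/
def Ulex (Proves : ℕ → ℕ → Prop) : ℕ × ℕ → Set (ℕ × ℕ)
  | (i, 0) => {(i, 0)} ∪ {q | ∃ j, q = (i, j) ∧ Proves j i}
  | (i, j + 1) => {(i, 0), (i, j + 1)}

lemma Ulex_fst {P : ℕ → ℕ → Prop} {x z : ℕ × ℕ} (hz : z ∈ Ulex P x) : z.1 = x.1 := by
  obtain ⟨i, j⟩ := x
  cases j with
  | zero =>
    rcases hz with h | ⟨j, rfl, _⟩
    · simp_all [Set.mem_singleton_iff]
    · rfl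
  | succ j =>
    rcases hz with h | h <;> simp_all

lemma Ulex_base {P : ℕ → ℕ → Prop} (x : ℕ × ℕ) : (x.1, 0) ∈ Ulex P x := by
  obtain ⟨i, j⟩ := x
  cases j with
  | zero => exact Or.inl rfl
  | succ j => exact Or.inl rfl

lemma hLex_top_eq (a : ℕ∞) (z : ℕ × ℕ) :
    hLex a ⊤ z = decide ((z.1 : ℕ∞) ≤ a) := by
  simp [hLex, le_iff_lt_or_eq, le_top, and_true]

lemma robLoss_mono (P : ℕ → ℕ → Prop) (a b : ℕ∞) (x : ℕ × ℕ) (y : Bool)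
    (h : RobLoss (Ulex P) (hLex a ⊤) x y) : RobLoss (Ulex P) (hLex a b) x y := by
  obtain ⟨z, hz, hne⟩ := h
  rw [hLex_top_eq] at hne
  by_cases hle : (z.1 : ℕ∞) ≤ a
  · -- y = false; use the base point (x.1, 0)
    have hy : y = false := by
      simp [hle] at hne; cases y <;> simp_all
    refine ⟨(x.1, 0), Ulex_base x, ?_⟩
    have hx1 : (x.1 : ℕ∞) ≤ a := Ulex_fst hz ▸ hle
    rcases lt_or_eq_of_le hx1 with h1 | h1
    · simp [hLex, hy, h1]
    · simp [hLex, hy, h1]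
  · -- y = true; same z works
    have hy : y = true := by
      simp [hle] at hne; cases y <;> simp_all
    refine ⟨z, hz, ?_⟩
    have h1 : ¬ (z.1 : ℕ∞) < a := fun h => hle h.le
    have h2 : ¬ (z.1 : ℕ∞) = a := fun h => hle h.le
    simp [hLex, hy, h1, h2]

lemma empRobRisk_mono {α : Type*} (U : α → Set α) (f g : α → Bool)
    (S : List (α × Bool))
    (h : ∀ p ∈ S, RobLoss U f p.1 p.2 → RobLoss U g p.1 p.2) :
    empRobRisk U f S ≤ empRobRisk U g S := by
  classical
  unfold empRobRisk
  rcases Nat.eq_zero_or_pos S.length with h0 | h0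
  · simp [h0]
  · rw [div_le_div_iff_of_pos_right (by exact_mod_cast h0)]
    apply List.sum_le_sum
    intro p hp
    by_cases h1 : RobLoss U f p.1 p.2
    · simp [h1, h p hp h1]
    · simp only [h1, if_false]
      split_ifs <;> norm_num

lemma empRobRisk_congr {α : Type*} (U : α → Set α) (f g : α → Bool)
    (S : List (α × Bool))
    (h : ∀ p ∈ S, RobLoss U f p.1 p.2 ↔ RobLoss U g p.1 p.2) :
    empRobRisk U f S = empRobRisk U g S :=
  le_antisymm (empRobRisk_mono U f g S fun p hp => (h p hp).mp)
    (empRobRisk_mono U g f S fun p hp => (h p hp).mpr)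

lemma robLoss_of_lt (P : ℕ → ℕ → Prop) (a b : ℕ∞) (x : ℕ × ℕ) (y : Bool)
    (hx : (x.1 : ℕ∞) < a) :
    RobLoss (Ulex P) (hLex a b) x y ↔ y = false := by
  constructor
  · rintro ⟨z, hz, hne⟩
    have : hLex a b z = true := by
      simp [hLex, Ulex_fst hz, hx]
    cases y <;> simp_all
  · rintro rfl
    exact ⟨(x.1, 0), Ulex_base x, by simp [hLex, hx]⟩

lemma risk_big (P : ℕ → ℕ → Prop) (S : List ((ℕ × ℕ) × Bool)) (M : ℕ)
    (hM : ∀ p ∈ S, p.1.1 < M) (a' b' : ℕ∞) (ha' : (M : ℕ∞) ≤ a') :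
    empRobRisk (Ulex P) (hLex a' b') S = empRobRisk (Ulex P) (hLex (M : ℕ∞) ⊤) S := by
  apply empRobRisk_congr
  intro p hp
  have h1 : (p.1.1 : ℕ∞) < a' := lt_of_lt_of_le (by exact_mod_cast hM p hp) ha'
  have h2 : (p.1.1 : ℕ∞) < (M : ℕ∞) := by exact_mod_cast hM p hp
  rw [robLoss_of_lt _ _ _ _ _ h1, robLoss_of_lt _ _ _ _ _ h2]

/-- For the lexicographic initial segment class and the perturbation type of
Theorem 4.3: for every finite labelled sample `S` and every `a ∈ ℕ`, the empirical
robust risk of `h_{a,∞}` is at most that of `h_{a,b}` for every `b ∈ ℕ`.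
Consequently, the subclass `H' = {h_{a,∞} : a ∈ ℕ}` always contains an empirical
robust risk minimizer of `H`. -/
theorem hLex_top_dominates (Proves : ℕ → ℕ → Prop)
    (S : List ((ℕ × ℕ) × Bool)) :
    (∀ a b : ℕ, empRobRisk (Ulex Proves) (hLex (a : ℕ∞) ⊤) S ≤
      empRobRisk (Ulex Proves) (hLex (a : ℕ∞) (b : ℕ∞)) S) ∧
    (∃ a : ℕ, ∀ a' b' : ℕ∞, empRobRisk (Ulex Proves) (hLex (a : ℕ∞) ⊤) S ≤
      empRobRisk (Ulex Proves) (hLex a' b') S) := by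
  have part1 : ∀ (a b : ℕ∞), empRobRisk (Ulex Proves) (hLex a ⊤) S ≤
      empRobRisk (Ulex Proves) (hLex a b) S := fun a b =>
    empRobRisk_mono _ _ _ S fun p _ => robLoss_mono Proves a b p.1 p.2
  refine ⟨fun a b => part1 a b, ?_⟩
  set M : ℕ := (S.map fun p => p.1.1).sum + 1 with hMdef
  have hM : ∀ p ∈ S, p.1.1 < M := by
    intro p hp
    have : p.1.1 ≤ (S.map fun p => p.1.1).sum :=
      List.single_le_sum (fun i _ => Nat.zero_le i) _ (List.mem_map_of_mem (f := fun p => p.1.1) hp)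
    omega
  set g : ℕ → ℝ := fun a => empRobRisk (Ulex Proves) (hLex (a : ℕ∞) ⊤) S with hg
  obtain ⟨a₀, _, ha₀⟩ := (Finset.range (M + 1)).exists_min_image g ⟨0, by simp⟩
  refine ⟨a₀, ?_⟩
  intro a' b'
  have hbig : (M : ℕ∞) ≤ a' → g a₀ ≤ empRobRisk (Ulex Proves) (hLex a' b') S := by
    intro h
    rw [risk_big Proves S M hM a' b' h]
    exact ha₀ M (Finset.mem_range.mpr (Nat.lt_succ_self M))
  induction a' using ENat.recTopCoe with
  | top => exact hbig le_top
  | coe a =>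
    by_cases hA : a < M
    · exact le_trans (ha₀ a (Finset.mem_range.mpr (by omega))) (part1 (a : ℕ∞) b')
    · exact hbig (by exact_mod_cast not_lt.mp hA)
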